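/- Let I be an index set and (X i)_{i ∈ I} a family of topological spaces. Then the Kolmogorov quotient of the product is homeomorphic to the product of the Kolmogorov quotients: SeparationQuotient (∀ i, X i) ≃ₜ ∀ i, SeparationQuotient (X i), where the products carry the product topology; moreover the homeomorphism f satisfies f (mk z) i = mk (z i) for all z and i. -/

import Mathlib

open SeparationQuotient Set Function

theorem separationQuotient_pi_homeomorph {I : Type*} (X : I → Type*)
    [∀ i, TopologicalSpace (X i)] :
    ∃ f : SeparationQuotient (∀ i, X i) ≃ₜ ∀ i, SeparationQuotient (X i),
      ∀ (z : ∀ i, X i) (i : I),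
        f (SeparationQuotient.mk z) i = SeparationQuotient.mk (z i) := by
  have key : ∀ x y : ∀ i, X i, Inseparable x y →
      (fun i => SeparationQuotient.mk (x i)) = (fun i => SeparationQuotient.mk (y i)) := by
    intro x y h
    funext i
    exact SeparationQuotient.mk_eq_mk.2 ((inseparable_pi.1 h) i)
  set F : SeparationQuotient (∀ i, X i) → ∀ i, SeparationQuotient (X i) :=
    SeparationQuotient.lift (fun z i => SeparationQuotient.mk (z i)) key with hF
  have hFmk : ∀ z, F (SeparationQuotient.mk z) = fun i => SeparationQuotient.mk (z i) :=
    fun z => rfl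
  have hbij : Function.Bijective F := by
    constructor
    · rintro ⟨x⟩ ⟨y⟩ h
      refine SeparationQuotient.mk_eq_mk.2 (inseparable_pi.2 fun i => ?_)
      exact SeparationQuotient.mk_eq_mk.1 (congrFun h i)
    · intro g
      choose z hz using fun i => SeparationQuotient.surjective_mk (g i)
      exact ⟨SeparationQuotient.mk z, funext hz⟩
  have hcont : Continuous F := SeparationQuotient.continuous_lift_iff.2 <| by
    exact continuous_pi fun i => SeparationQuotient.continuous_mk.comp (continuous_apply i)
  have hopen : IsOpenMap F := by
    intro U hU
    have h1 : IsOpenMap (Pi.map fun i => (SeparationQuotient.mk : X i → SeparationQuotient (X i))) :=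
      (IsOpenQuotientMap.piMap fun i => SeparationQuotient.isOpenQuotientMap_mk).isOpenMap
    have h2 : F '' U = (Pi.map fun i => (SeparationQuotient.mk : X i → SeparationQuotient (X i))) ''
        (SeparationQuotient.mk ⁻¹' U) := by
      ext g
      constructor
      · rintro ⟨u, hu, rfl⟩
        obtain ⟨z, rfl⟩ := SeparationQuotient.surjective_mk u
        exact ⟨z, hu, rfl⟩
      · rintro ⟨z, hz, rfl⟩
        exact ⟨SeparationQuotient.mk z, hz, rfl⟩
    rw [h2]
    exact h1 _ (hU.preimage SeparationQuotient.continuous_mk)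
  exact ⟨Equiv.toHomeomorphOfContinuousOpen (Equiv.ofBijective F hbij) hcont hopen,
    fun z i => rfl⟩
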